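/- arXiv:2411.04717 — 2 statements merged into one kernel-verified Lean document; each statement's English description precedes it below -/
import Mathlib

section
/- Suppose 2‖𝒜*(ψ)‖_op < 1, and let (α_n, β_n) be the sequence generated from α_0 = β_0 = φ by the closed-form alternating updates α_n = (2(1+λ)A_{β_{n−1}}^T A_{β_{n−1}} + I_d)^{−1}(2𝒜*(ψ)β_{n−1} + φ) and β_n = (2(1+λ)A_{α_n}^T A_{α_n} + I_d)^{−1}(2𝒜*(ψ)α_n + φ). Then for every ε > 0 there exists K₀(ε) such that for all n > K₀(ε), max{‖α_n‖₂, ‖β_n‖₂} ≤ ‖φ‖₂/(1 − 2‖𝒜*(ψ)‖_op) + ε. -/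
open Matrix Filter
open scoped BigOperators

noncomputable section

/-- squared Euclidean (ℓ2) norm of a vector in ℝ^m -/
def norm2sq {m : ℕ} (x : Fin m → ℝ) : ℝ := ∑ i, x i ^ 2

/-- Euclidean (ℓ2) norm of a vector in ℝ^m -/
def norm2 {m : ℕ} (x : Fin m → ℝ) : ℝ := Real.sqrt (norm2sq x)

/-- ℓ1 norm of a vector in ℝ^m -/
def norm1 {m : ℕ} (x : Fin m → ℝ) : ℝ := ∑ i, |x i|

/-- spectral (ℓ2 operator) norm of a matrix; for any matrix this equals its
largest singular value σ₁. -/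
def opNorm {m n : ℕ} (M : Matrix (Fin m) (Fin n) ℝ) : ℝ :=
  ‖LinearMap.toContinuousLinearMap (Matrix.toEuclideanLin M)‖

/-- the bilinear map 𝒜(α,β) ∈ ℝ^s with (𝒜(α,β))_k = αᵀ A_k β -/
def calA {d s : ℕ} (A : Fin s → Matrix (Fin d) (Fin d) ℝ) (α β : Fin d → ℝ) : Fin s → ℝ :=
  fun k => α ⬝ᵥ ((A k) *ᵥ β)

/-- the matrix A_τ ∈ ℝ^{s×d} whose k-th row is (A_k τ)ᵀ -/
def Amat {d s : ℕ} (A : Fin s → Matrix (Fin d) (Fin d) ℝ) (τ : Fin d → ℝ) :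
    Matrix (Fin s) (Fin d) ℝ :=
  Matrix.of fun k j => ((A k) *ᵥ τ) j

/-- the adjoint 𝒜*(c) = Σ_k c_k A_k ∈ ℝ^{d×d} -/
def Astar {d s : ℕ} (A : Fin s → Matrix (Fin d) (Fin d) ℝ) (c : Fin s → ℝ) :
    Matrix (Fin d) (Fin d) ℝ :=
  ∑ k, c k • A k

lemma norm2_eq' {m : ℕ} (x : Fin m → ℝ) :
    norm2 x = ‖(WithLp.equiv 2 (Fin m → ℝ)).symm x‖ := by
  simp [norm2, norm2sq, EuclideanSpace.norm_eq, sq_abs]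

lemma norm2_nonneg' {m : ℕ} (x : Fin m → ℝ) : 0 ≤ norm2 x := Real.sqrt_nonneg _

lemma norm2sq_nonneg' {m : ℕ} (x : Fin m → ℝ) : 0 ≤ norm2sq x :=
  Finset.sum_nonneg fun i _ => sq_nonneg _

lemma norm2_sq_eq {m : ℕ} (x : Fin m → ℝ) : norm2 x ^ 2 = norm2sq x :=
  Real.sq_sqrt (norm2sq_nonneg' x)

lemma norm2sq_eq_dot' {m : ℕ} (x : Fin m → ℝ) : norm2sq x = x ⬝ᵥ x := by
  simp [norm2sq, dotProduct, sq]

lemma norm2_mulVec_le {m n : ℕ} (M : Matrix (Fin m) (Fin n) ℝ) (x : Fin n → ℝ) :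
    norm2 (M *ᵥ x) ≤ opNorm M * norm2 x := by
  rw [norm2_eq', norm2_eq', ← Matrix.toLin'_apply, WithLp.equiv_symm_apply, WithLp.equiv_symm_apply, ← Matrix.toEuclideanLin_toLp]
  exact (LinearMap.toContinuousLinearMap (Matrix.toEuclideanLin M)).le_opNorm _

lemma norm2_add_smul_le {m : ℕ} (v φ : Fin m → ℝ) :
    norm2 ((2:ℝ) • v + φ) ≤ 2 * norm2 v + norm2 φ := by
  rw [norm2_eq', norm2_eq', norm2_eq', WithLp.equiv_symm_apply, WithLp.toLp_add, WithLp.toLp_smul]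
  refine (norm_add_le _ _).trans ?_
  rw [norm_smul]
  simp

lemma dot_le_norm2 {m : ℕ} (x y : Fin m → ℝ) : x ⬝ᵥ y ≤ norm2 x * norm2 y := by
  rw [norm2_eq', norm2_eq']
  have h := real_inner_le_norm ((WithLp.equiv 2 (Fin m → ℝ)).symm x)
    ((WithLp.equiv 2 (Fin m → ℝ)).symm y)
  rwa [show (inner ℝ ((WithLp.equiv 2 (Fin m → ℝ)).symm x)
      ((WithLp.equiv 2 (Fin m → ℝ)).symm y) : ℝ) = x ⬝ᵥ y from by
    simp [PiLp.inner_apply, dotProduct, WithLp.equiv_symm_apply, mul_comm]] at h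

lemma inv_contract_dot {m n : ℕ} (c : ℝ) (hc : 0 ≤ c)
    (B : Matrix (Fin m) (Fin n) ℝ) (y : Fin n → ℝ) :
    ((c • (Bᵀ * B) + 1)⁻¹ *ᵥ y) ⬝ᵥ ((c • (Bᵀ * B) + 1)⁻¹ *ᵥ y) ≤
      ((c • (Bᵀ * B) + 1)⁻¹ *ᵥ y) ⬝ᵥ y := by
  set M : Matrix (Fin n) (Fin n) ℝ := c • (Bᵀ * B) + 1 with hMdef
  have hBTB : ∀ x : Fin n → ℝ, 0 ≤ x ⬝ᵥ ((Bᵀ * B) *ᵥ x) := fun x => by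
    rw [← Matrix.mulVec_mulVec, Matrix.dotProduct_mulVec, Matrix.vecMul_transpose]
    exact Finset.sum_nonneg fun i _ => mul_self_nonneg _
  have key : ∀ x : Fin n → ℝ, x ⬝ᵥ x ≤ x ⬝ᵥ (M *ᵥ x) := by
    intro x
    have hx : M *ᵥ x = c • ((Bᵀ * B) *ᵥ x) + x := by
      simp [hMdef, add_mulVec, smul_mulVec]
    rw [hx, dotProduct_add, dotProduct_smul, smul_eq_mul]
    nlinarith [hBTB x]
  have hpd : M.PosDef := by
    refine Matrix.PosDef.of_dotProduct_mulVec_pos ?_ fun x hx => ?_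
    · show Mᴴ = M
      rw [hMdef, Matrix.conjTranspose_eq_transpose_of_trivial]
      simp [Matrix.transpose_add, Matrix.transpose_smul, Matrix.transpose_mul]
    · have hsx : star x = x := by simp
      rw [hsx]
      have h1 : 0 < x ⬝ᵥ x := by
        have := Matrix.dotProduct_star_self_pos_iff (v := x) |>.mpr hx
        simpa using this
      exact lt_of_lt_of_le h1 (key x)
  have hMM : M * M⁻¹ = 1 :=
    Matrix.mul_nonsing_inv M ((Matrix.isUnit_iff_isUnit_det M).mp hpd.isUnit)
  have hy : M *ᵥ (M⁻¹ *ᵥ y) = y := by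
    rw [Matrix.mulVec_mulVec, hMM, Matrix.one_mulVec]
  calc (M⁻¹ *ᵥ y) ⬝ᵥ (M⁻¹ *ᵥ y) ≤ (M⁻¹ *ᵥ y) ⬝ᵥ (M *ᵥ (M⁻¹ *ᵥ y)) := key _
    _ = (M⁻¹ *ᵥ y) ⬝ᵥ y := by rw [hy]

lemma norm2_inv_mulVec_le {m n : ℕ} (c : ℝ) (hc : 0 ≤ c)
    (B : Matrix (Fin m) (Fin n) ℝ) (y : Fin n → ℝ) :
    norm2 ((c • (Bᵀ * B) + 1)⁻¹ *ᵥ y) ≤ norm2 y := by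
  set z := (c • (Bᵀ * B) + 1)⁻¹ *ᵥ y with hz
  have h1 : norm2 z ^ 2 ≤ norm2 z * norm2 y := by
    calc norm2 z ^ 2 = z ⬝ᵥ z := by rw [norm2_sq_eq, norm2sq_eq_dot']
      _ ≤ z ⬝ᵥ y := inv_contract_dot c hc B y
      _ ≤ norm2 z * norm2 y := dot_le_norm2 z y
  rcases eq_or_lt_of_le (norm2_nonneg' z) with h0 | h0
  · rw [← h0]; exact norm2_nonneg' y
  · nlinarith [h1, h0]

/-- if 2‖𝒜*(ψ)‖_op < 1, the alternating closed-form updates started at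
α₀ = β₀ = φ are eventually bounded by ‖φ‖₂/(1 − 2‖𝒜*(ψ)‖_op) + ε for every ε > 0. -/
theorem statement4 {d s : ℕ} (hd : 0 < d) (hs : 0 < s)
    (A : Fin s → Matrix (Fin d) (Fin d) ℝ) (hA : ∀ k, (A k).IsSymm)
    (φ : Fin d → ℝ) (ψ : Fin s → ℝ) (lam : ℝ) (hlam : 0 ≤ lam)
    (hop : 2 * opNorm (Astar A ψ) < 1)
    (α β : ℕ → Fin d → ℝ) (hα0 : α 0 = φ) (hβ0 : β 0 = φ)
    (hαrec : ∀ n, α (n + 1) =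
      (((2 * (1 + lam)) • ((Amat A (β n))ᵀ * Amat A (β n)) + 1)⁻¹) *ᵥ
        ((2 : ℝ) • ((Astar A ψ) *ᵥ β n) + φ))
    (hβrec : ∀ n, β (n + 1) =
      (((2 * (1 + lam)) • ((Amat A (α (n + 1)))ᵀ * Amat A (α (n + 1))) + 1)⁻¹) *ᵥ
        ((2 : ℝ) • ((Astar A ψ) *ᵥ α (n + 1)) + φ)) :
    ∀ ε : ℝ, 0 < ε → ∃ K₀ : ℕ, ∀ n : ℕ, K₀ < n →
      max (norm2 (α n)) (norm2 (β n))
        ≤ norm2 φ / (1 - 2 * opNorm (Astar A ψ)) + ε := by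
  intro ε hε
  set c := opNorm (Astar A ψ) with hc
  have hc0 : 0 ≤ c := norm_nonneg _
  have hr1 : 1 - 2 * c > 0 := by linarith
  set L := norm2 φ / (1 - 2 * c) with hL
  have hφL : norm2 φ ≤ L := by
    rw [hL, le_div_iff₀ hr1]
    nlinarith [norm2_nonneg' φ, hc0]
  have hclam : (0:ℝ) ≤ 2 * (1 + lam) := by linarith
  -- one-step bound
  have step : ∀ (τ x : Fin d → ℝ), norm2 x ≤ L →
      norm2 ((((2 * (1 + lam)) • ((Amat A τ)ᵀ * Amat A τ) + 1)⁻¹) *ᵥ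
        ((2 : ℝ) • ((Astar A ψ) *ᵥ x) + φ)) ≤ L := by
    intro τ x hx
    have h1 := norm2_inv_mulVec_le (2 * (1 + lam)) hclam (Amat A τ)
      ((2 : ℝ) • ((Astar A ψ) *ᵥ x) + φ)
    have h2 := norm2_add_smul_le ((Astar A ψ) *ᵥ x) φ
    have h3 := norm2_mulVec_le (Astar A ψ) x
    have hLφ : 2 * c * L + norm2 φ ≤ L := by
      have hEq : L * (1 - 2 * c) = norm2 φ := div_mul_cancel₀ _ hr1.ne'
      nlinarith [hEq]
    calc norm2 ((((2 * (1 + lam)) • ((Amat A τ)ᵀ * Amat A τ) + 1)⁻¹) *ᵥ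
          ((2 : ℝ) • ((Astar A ψ) *ᵥ x) + φ))
        ≤ norm2 ((2 : ℝ) • ((Astar A ψ) *ᵥ x) + φ) := h1
      _ ≤ 2 * norm2 ((Astar A ψ) *ᵥ x) + norm2 φ := h2
      _ ≤ 2 * (c * norm2 x) + norm2 φ := by nlinarith
      _ ≤ 2 * (c * L) + norm2 φ := by nlinarith
      _ ≤ L := by linarith [hLφ]
  have bound : ∀ n, norm2 (α n) ≤ L ∧ norm2 (β n) ≤ L := by
    intro n
    induction n with
    | zero => rw [hα0, hβ0]; exact ⟨hφL, hφL⟩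
    | succ k ih =>
      have hα' : norm2 (α (k + 1)) ≤ L := by
        rw [hαrec k]; exact step _ _ ih.2
      refine ⟨hα', ?_⟩
      rw [hβrec k]; exact step _ _ hα'
  exact ⟨0, fun n _ => le_trans (max_le (bound n).1 (bound n).2) (by linarith)⟩
end
end

section
/- Fix Φ ∈ ℝ^{d×n} with λ_min(Ψ(Φ)Ψ(Φ)^T) > 0, and let (Θ_t, c_t, Q_t) be generated by the alternating updates c_{t+1} = (1/n)(X − Q_t M(Θ_t))1_n, Q_{t+1} = argmax_{Q^TQ=I_{d+s}} ⟨R(c_{t+1})M(Θ_t)^T, Q⟩, Θ_{t+1} = (Ψ(Φ)Ψ(Φ)^T)^{−1}Ψ(Φ)R(c_{t+1})^T V_{t+1} where V_{t+1} consists of the last s columns of Q_{t+1}. If a subsequence satisfies lim_j c_{t_j} = c* and lim_j Q_{t_j} = Q*, then Θ_{t_j} also converges, to Θ* = (Ψ(Φ)Ψ(Φ)^T)^{−1}Ψ(Φ)R(c*)^T V* where V* consists of the last s columns of Q*; and if additionally the singular values of R(c*)M(Θ*)^T are distinct, then (Q*, c*, Θ*) is a fixed point of the three updates, i.e., c* =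 (1/n)(X − Q*M(Θ*))1_n, Q* maximizes ⟨R(c*)M(Θ*)^T, Q⟩ over {Q : Q^TQ = I_{d+s}}, and Θ* = (Ψ(Φ)Ψ(Φ)^T)^{−1}Ψ(Φ)R(c*)^T V*; in particular (Q*, c*, Θ*) satisfies the first-order optimality (KKT) conditions of minimizing ℓ(Θ,c,Q,Φ) subject to Q^TQ = I_{d+s}. -/
open Matrix Filter
open scoped BigOperators

noncomputable section

/-- index set of size (d²+d)/2 : pairs (j,k) with j ≤ k -/
abbrev PairIdx (d : ℕ) := {p : Fin d × Fin d // p.1 ≤ p.2}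

/-- squared Frobenius norm -/
def frobSq {m n : Type*} [Fintype m] [Fintype n] (M : Matrix m n ℝ) : ℝ :=
  ∑ i, ∑ j, (M i j) ^ 2

/-- Frobenius inner product ⟨A,B⟩ = tr(AᵀB) -/
def finner {m n : Type*} [Fintype m] [Fintype n] (A B : Matrix m n ℝ) : ℝ :=
  ∑ i, ∑ j, A i j * B i j

/-- Ψ(Φ) ∈ ℝ^{((d²+d)/2)×n}: the i-th column lists the products τ_{i,j}τ_{i,k}, j ≤ k -/
def PsiMat {d n : ℕ} (Φ : Matrix (Fin d) (Fin n) ℝ) : Matrix (PairIdx d) (Fin n) ℝ :=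
  Matrix.of fun p i => Φ p.1.1 i * Φ p.1.2 i

/-- M(Θ,Φ) = [Φᵀ, Ψ(Φ)ᵀΘ]ᵀ ∈ ℝ^{(d+s)×n} -/
def Mmat {d s n : ℕ} (Φ : Matrix (Fin d) (Fin n) ℝ) (Θ : Matrix (PairIdx d) (Fin s) ℝ) :
    Matrix (Fin d ⊕ Fin s) (Fin n) ℝ :=
  Matrix.fromRows Φ (Θᵀ * PsiMat Φ)

/-- ℓ(Θ,c,Q,Φ) = ‖X − c1_nᵀ − Q[Φᵀ, Ψ(Φ)ᵀΘ]ᵀ‖_F² -/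
def ell {D n d s : ℕ} (X : Matrix (Fin D) (Fin n) ℝ)
    (Θ : Matrix (PairIdx d) (Fin s) ℝ) (c : Fin D → ℝ)
    (Q : Matrix (Fin D) (Fin d ⊕ Fin s) ℝ) (Φ : Matrix (Fin d) (Fin n) ℝ) : ℝ :=
  frobSq (X - Matrix.of (fun i (_ : Fin n) => c i) - Q * Mmat Φ Θ)

/-- ℓ_λ(Θ,c,Q,Φ) = ℓ(Θ,c,Q,Φ) + λ‖ΘᵀΨ(Φ)‖_F² -/
def ellReg {D n d s : ℕ} (X : Matrix (Fin D) (Fin n) ℝ) (lam : ℝ)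
    (Θ : Matrix (PairIdx d) (Fin s) ℝ) (c : Fin D → ℝ)
    (Q : Matrix (Fin D) (Fin d ⊕ Fin s) ℝ) (Φ : Matrix (Fin d) (Fin n) ℝ) : ℝ :=
  ell X Θ c Q Φ + lam * frobSq (Θᵀ * PsiMat Φ)

/-- R(c) = X − c1_nᵀ -/
def Rmat {D n : ℕ} (X : Matrix (Fin D) (Fin n) ℝ) (c : Fin D → ℝ) : Matrix (Fin D) (Fin n) ℝ :=
  X - Matrix.of (fun i (_ : Fin n) => c i)

/-- the last s columns of Q (the matrix V) -/
def lastCols {D d s : ℕ} (Q : Matrix (Fin D) (Fin d ⊕ Fin s) ℝ) : Matrix (Fin D) (Fin s) ℝ :=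
  Q.submatrix id Sum.inr


section AuxLemmas

variable {m n p : Type*} [Fintype m] [Fintype n] [Fintype p]

lemma finner_eq_trace (A B : Matrix m n ℝ) : finner A B = Matrix.trace (Aᵀ * B) := by
  simp only [finner, Matrix.trace, Matrix.diag_apply, Matrix.mul_apply, Matrix.transpose_apply]
  exact Finset.sum_comm

lemma finner_comm (A B : Matrix m n ℝ) : finner A B = finner B A := by
  simp [finner, mul_comm]

lemma finner_mul_left (A : Matrix m p ℝ) (B : Matrix p n ℝ) (C : Matrix m n ℝ) :
    finner (A * B) C = finner B (Aᵀ * C) := by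
  rw [finner_eq_trace, finner_eq_trace, Matrix.transpose_mul, Matrix.mul_assoc]

lemma finner_mul_right (A : Matrix m n ℝ) (B : Matrix m p ℝ) (C : Matrix p n ℝ) :
    finner A (B * C) = finner (Bᵀ * A) C := by
  rw [finner_comm, finner_mul_left, finner_comm]

lemma finner_mul_right' (A : Matrix m n ℝ) (B : Matrix m p ℝ) (C : Matrix p n ℝ) :
    finner A (B * C) = finner (A * Cᵀ) B := by
  rw [finner_eq_trace, finner_eq_trace, Matrix.transpose_mul, Matrix.transpose_transpose,
    ← Matrix.mul_assoc, Matrix.trace_mul_cycle]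

lemma finner_zero_left (B : Matrix m n ℝ) : finner 0 B = 0 := by simp [finner]

lemma frobSq_eq_finner (A : Matrix m n ℝ) : frobSq A = finner A A := by
  simp [frobSq, finner, sq]

lemma frobSq_nonneg (A : Matrix m n ℝ) : 0 ≤ frobSq A :=
  Finset.sum_nonneg fun _ _ => Finset.sum_nonneg fun _ _ => sq_nonneg _

lemma frobSq_sub (A B : Matrix m n ℝ) :
    frobSq (A - B) = frobSq A - 2 * finner A B + frobSq B := by
  have h : ∀ i, ∑ j, (A i j - B i j) ^ 2
      = (∑ j, A i j ^ 2) - 2 * (∑ j, A i j * B i j) + ∑ j, B i j ^ 2 := by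
    intro i
    rw [Finset.mul_sum, ← Finset.sum_sub_distrib, ← Finset.sum_add_distrib]
    exact Finset.sum_congr rfl fun j _ => by ring
  simp only [frobSq, finner, Matrix.sub_apply]
  simp_rw [h]
  rw [Finset.mul_sum, ← Finset.sum_sub_distrib, ← Finset.sum_add_distrib]

lemma frobSq_mul_orth [DecidableEq n] {Q : Matrix m n ℝ} (hQ : Qᵀ * Q = 1) (M : Matrix n p ℝ) :
    frobSq (Q * M) = frobSq M := by
  rw [frobSq_eq_finner, finner_mul_left, ← Matrix.mul_assoc, hQ, Matrix.one_mul,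
    frobSq_eq_finner]

end AuxLemmas

/-- the first d columns of Q (the matrix U) -/
def firstCols {D d s : ℕ} (Q : Matrix (Fin D) (Fin d ⊕ Fin s) ℝ) : Matrix (Fin D) (Fin d) ℝ :=
  Q.submatrix id Sum.inl

lemma mul_Mmat {D n d s : ℕ} (Q : Matrix (Fin D) (Fin d ⊕ Fin s) ℝ)
    (Φ : Matrix (Fin d) (Fin n) ℝ) (Θ : Matrix (PairIdx d) (Fin s) ℝ) :
    Q * Mmat Φ Θ = firstCols Q * Φ + lastCols Q * (Θᵀ * PsiMat Φ) := by
  ext i k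
  simp [Mmat, Matrix.mul_apply, Fintype.sum_sum_type, firstCols, lastCols]

lemma lastCols_T_mul_firstCols {D d s : ℕ} {Q : Matrix (Fin D) (Fin d ⊕ Fin s) ℝ}
    (hQ : Qᵀ * Q = 1) : (lastCols Q)ᵀ * firstCols Q = 0 := by
  ext i k
  have h := congrFun (congrFun hQ (Sum.inr i)) (Sum.inl k)
  simpa [Matrix.mul_apply, Matrix.one_apply, lastCols, firstCols] using h

lemma lastCols_T_mul_lastCols {D d s : ℕ} {Q : Matrix (Fin D) (Fin d ⊕ Fin s) ℝ}
    (hQ : Qᵀ * Q = 1) : (lastCols Q)ᵀ * lastCols Q = 1 := by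
  ext i k
  have h := congrFun (congrFun hQ (Sum.inr i)) (Sum.inr k)
  simpa [Matrix.mul_apply, Matrix.one_apply, lastCols] using h

/-- exact optimality of the Θ update (least squares with positive definite Gram matrix) -/
lemma theta_opt {D n d s : ℕ} (Φ : Matrix (Fin d) (Fin n) ℝ)
    (hpd : (PsiMat Φ * (PsiMat Φ)ᵀ).PosDef)
    (R : Matrix (Fin D) (Fin n) ℝ) (Q : Matrix (Fin D) (Fin d ⊕ Fin s) ℝ)
    (hQ : Qᵀ * Q = 1) (Θ : Matrix (PairIdx d) (Fin s) ℝ) :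
    frobSq (R - Q * Mmat Φ ((PsiMat Φ * (PsiMat Φ)ᵀ)⁻¹ * PsiMat Φ * Rᵀ * lastCols Q))
      ≤ frobSq (R - Q * Mmat Φ Θ) := by
  set S := PsiMat Φ with hS
  set G := S * Sᵀ with hG
  have hdet : IsUnit G.det := (Matrix.isUnit_iff_isUnit_det _).mp hpd.isUnit
  have hGsymm : Gᵀ = G := by rw [hG, Matrix.transpose_mul, Matrix.transpose_transpose]
  set V := lastCols Q with hV
  set U := firstCols Q with hU
  have hVU : Vᵀ * U = 0 := lastCols_T_mul_firstCols hQ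
  have hVV : Vᵀ * V = 1 := lastCols_T_mul_lastCols hQ
  set Θh := G⁻¹ * S * Rᵀ * V with hΘh
  have key : R - Q * Mmat Φ Θ = (R - Q * Mmat Φ Θh) - V * ((Θ - Θh)ᵀ * S) := by
    rw [mul_Mmat, mul_Mmat, Matrix.transpose_sub, Matrix.sub_mul, Matrix.mul_sub]
    abel
  have hΘhG : Θhᵀ * G = Vᵀ * R * Sᵀ := by
    rw [hΘh]
    simp only [Matrix.transpose_mul, Matrix.transpose_transpose, Matrix.transpose_nonsing_inv,
      hGsymm]
    simp only [Matrix.mul_assoc, Matrix.nonsing_inv_mul _ hdet, Matrix.mul_one]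
  have hcross : finner (R - Q * Mmat Φ Θh) (V * ((Θ - Θh)ᵀ * S)) = 0 := by
    rw [finner_mul_right, finner_mul_right']
    have hz : Vᵀ * (R - Q * Mmat Φ Θh) * Sᵀ = 0 := by
      rw [mul_Mmat, Matrix.mul_sub, Matrix.mul_add, ← Matrix.mul_assoc, ← Matrix.mul_assoc,
        hVU, hVV, Matrix.zero_mul, Matrix.one_mul, zero_add, Matrix.sub_mul,
        Matrix.mul_assoc Θhᵀ S Sᵀ, ← hG, hΘhG, sub_self]
    rw [hz, finner_zero_left]
  rw [key, frobSq_sub (R - Q * Mmat Φ Θh) (V * ((Θ - Θh)ᵀ * S)), hcross]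
  have := frobSq_nonneg (V * ((Θ - Θh)ᵀ * S))
  linarith

lemma ell_eq_frob {D n d s : ℕ} (X : Matrix (Fin D) (Fin n) ℝ)
    (Θ : Matrix (PairIdx d) (Fin s) ℝ) (c : Fin D → ℝ)
    (Q : Matrix (Fin D) (Fin d ⊕ Fin s) ℝ) (Φ : Matrix (Fin d) (Fin n) ℝ) :
    ell X Θ c Q Φ = frobSq (Rmat X c - Q * Mmat Φ Θ) := rfl

lemma ell_eq_frob' {D n d s : ℕ} (X : Matrix (Fin D) (Fin n) ℝ)
    (Θ : Matrix (PairIdx d) (Fin s) ℝ) (c : Fin D → ℝ)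
    (Q : Matrix (Fin D) (Fin d ⊕ Fin s) ℝ) (Φ : Matrix (Fin d) (Fin n) ℝ) :
    ell X Θ c Q Φ
      = frobSq ((X - Q * Mmat Φ Θ) - Matrix.of (fun i (_ : Fin n) => c i)) := by
  rw [ell, sub_right_comm]

lemma ell_orth {D n d s : ℕ} (X : Matrix (Fin D) (Fin n) ℝ)
    (Θ : Matrix (PairIdx d) (Fin s) ℝ) (c : Fin D → ℝ)
    {Q : Matrix (Fin D) (Fin d ⊕ Fin s) ℝ} (hQ : Qᵀ * Q = 1)
    (Φ : Matrix (Fin d) (Fin n) ℝ) :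
    ell X Θ c Q Φ = frobSq (Rmat X c)
      - 2 * finner (Rmat X c * (Mmat Φ Θ)ᵀ) Q + frobSq (Mmat Φ Θ) := by
  rw [ell_eq_frob, frobSq_sub, finner_mul_right', frobSq_mul_orth hQ]

lemma sum_sq_shift {n : ℕ} (f : Fin n → ℝ) (μ x : ℝ) (hm : (n : ℝ) * μ = ∑ k, f k) :
    ∑ k, (f k - x) ^ 2 = (∑ k, (f k - μ) ^ 2) + (n : ℝ) * (x - μ) ^ 2 := by
  have h : ∀ k, (f k - x) ^ 2
      = ((f k - μ) ^ 2 + (2 * (μ - x)) * f k) + ((x - μ) ^ 2 - 2 * (μ - x) * μ) := by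
    intro k; ring
  simp_rw [h]
  rw [Finset.sum_add_distrib, Finset.sum_add_distrib, ← Finset.mul_sum, ← hm,
    Finset.sum_const, Finset.card_univ, Fintype.card_fin, nsmul_eq_mul]
  ring

/-- exact optimality (with explicit error term) of the c update -/
lemma cshift {D n : ℕ} (hn : 0 < n) (A : Matrix (Fin D) (Fin n) ℝ) (c : Fin D → ℝ) :
    frobSq (A - Matrix.of fun i (_ : Fin n) => c i)
      = frobSq (A - Matrix.of fun i (_ : Fin n) =>
            ((1 / (n : ℝ)) • (A *ᵥ fun _ => (1 : ℝ))) i)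
        + (n : ℝ) * ∑ i, (c i - ((1 / (n : ℝ)) • (A *ᵥ fun _ => (1 : ℝ))) i) ^ 2 := by
  have hn' : (n : ℝ) ≠ 0 := Nat.cast_ne_zero.mpr hn.ne'
  unfold frobSq
  rw [Finset.mul_sum, ← Finset.sum_add_distrib]
  refine Finset.sum_congr rfl fun i _ => ?_
  simp only [Matrix.sub_apply, Matrix.of_apply, Pi.smul_apply, Matrix.mulVec,
    dotProduct, mul_one, smul_eq_mul]
  exact sum_sq_shift (fun k => A i k) _ _ (by field_simp)

section ContLemmas
variable {α : Type*} [TopologicalSpace α] {m n : Type*} [Fintype m] [Fintype n]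

lemma Continuous.finner' {f g : α → Matrix m n ℝ} (hf : Continuous f) (hg : Continuous g) :
    Continuous fun x => finner (f x) (g x) := by
  unfold finner
  refine continuous_finset_sum _ fun i _ => continuous_finset_sum _ fun j _ => ?_
  exact (hf.matrix_elem i j).mul (hg.matrix_elem i j)

lemma Continuous.frobSq' {f : α → Matrix m n ℝ} (hf : Continuous f) :
    Continuous fun x => frobSq (f x) := by
  unfold frobSq
  refine continuous_finset_sum _ fun i _ => continuous_finset_sum _ fun j _ => ?_
  exact (hf.matrix_elem i j).pow 2

lemma continuous_ofc {D n : ℕ} :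
    Continuous fun c : Fin D → ℝ => (Matrix.of fun i (_ : Fin n) => c i) :=
  continuous_pi fun i => continuous_pi fun _ => continuous_apply i

lemma continuous_Rmat {D n : ℕ} (X : Matrix (Fin D) (Fin n) ℝ) :
    Continuous fun c => Rmat X c :=
  continuous_const.sub continuous_ofc

lemma continuous_Mmat {d s n : ℕ} (Φ : Matrix (Fin d) (Fin n) ℝ) :
    Continuous fun Θ : Matrix (PairIdx d) (Fin s) ℝ => Mmat Φ Θ := by
  have h : Continuous fun Θ : Matrix (PairIdx d) (Fin s) ℝ => Θᵀ * PsiMat Φ :=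
    (continuous_id.matrix_transpose).matrix_mul continuous_const
  refine continuous_pi fun i => ?_
  cases i with
  | inl i => exact continuous_pi fun j => by simpa [Mmat] using (continuous_const : Continuous fun _ :
      Matrix (PairIdx d) (Fin s) ℝ => Φ i j)
  | inr i => exact continuous_pi fun j => h.matrix_elem i j

lemma continuous_lastCols {D d s : ℕ} :
    Continuous fun Q : Matrix (Fin D) (Fin d ⊕ Fin s) ℝ => lastCols Q :=
  continuous_id.matrix_submatrix id Sum.inr

lemma continuous_ell {D n d s : ℕ} (X : Matrix (Fin D) (Fin n) ℝ)
    (Φ : Matrix (Fin d) (Fin n) ℝ) :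
    Continuous fun p : (Fin D → ℝ) × Matrix (Fin D) (Fin d ⊕ Fin s) ℝ
        × Matrix (PairIdx d) (Fin s) ℝ => ell X p.2.2 p.1 p.2.1 Φ := by
  unfold ell
  apply Continuous.frobSq'
  exact (continuous_const.sub (continuous_ofc.comp continuous_fst)).sub
    ((continuous_fst.comp continuous_snd).matrix_mul
      ((continuous_Mmat Φ).comp (continuous_snd.comp continuous_snd)))

end ContLemmas

/-- convergence of the inner (regression) alternating iteration: along any
convergent subsequence (c_{t_j}, Q_{t_j}) → (c*, Q*), also Θ_{t_j} → Θ*, where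
Θ* = (Ψ(Φ)Ψ(Φ)ᵀ)⁻¹Ψ(Φ)R(c*)ᵀV*; and if the singular values of R(c*)M(Θ*)ᵀ are distinct
(i.e. the eigenvalues of (R(c*)M(Θ*)ᵀ)ᴴ(R(c*)M(Θ*)ᵀ) are pairwise distinct), the limit
(Q*, c*, Θ*) is a fixed point of the three closed-form updates — the first-order KKT
conditions of minimizing ℓ(Θ,c,Q,Φ) subject to QᵀQ = I. -/
theorem statement18 {D n d s : ℕ} (hD : 0 < D) (hn : 0 < n) (hd : 0 < d) (hs : 0 < s)
    (hds : d + s ≤ D) (X : Matrix (Fin D) (Fin n) ℝ)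
    (Φ : Matrix (Fin d) (Fin n) ℝ)
    (hpd : (PsiMat Φ * (PsiMat Φ)ᵀ).PosDef)
    (Θ : ℕ → Matrix (PairIdx d) (Fin s) ℝ) (c : ℕ → Fin D → ℝ)
    (Q : ℕ → Matrix (Fin D) (Fin d ⊕ Fin s) ℝ)
    (hc : ∀ t, c (t + 1) = (1 / (n : ℝ)) • ((X - Q t * Mmat Φ (Θ t)) *ᵥ fun _ => (1 : ℝ)))
    (hQorth : ∀ t, (Q (t + 1))ᵀ * Q (t + 1) = 1)
    (hQmax : ∀ t, ∀ Q' : Matrix (Fin D) (Fin d ⊕ Fin s) ℝ, Q'ᵀ * Q' = 1 →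
        finner (Rmat X (c (t + 1)) * (Mmat Φ (Θ t))ᵀ) Q'
          ≤ finner (Rmat X (c (t + 1)) * (Mmat Φ (Θ t))ᵀ) (Q (t + 1)))
    (hΘ : ∀ t, Θ (t + 1) =
        (PsiMat Φ * (PsiMat Φ)ᵀ)⁻¹ * PsiMat Φ * (Rmat X (c (t + 1)))ᵀ * lastCols (Q (t + 1)))
    (t : ℕ → ℕ) (hmono : StrictMono t)
    (cstar : Fin D → ℝ) (Qstar : Matrix (Fin D) (Fin d ⊕ Fin s) ℝ)
    (hcs : Tendsto (fun j => c (t j)) atTop (nhds cstar))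
    (hQs : Tendsto (fun j => Q (t j)) atTop (nhds Qstar))
    (Θstar : Matrix (PairIdx d) (Fin s) ℝ)
    (hΘstar : Θstar = (PsiMat Φ * (PsiMat Φ)ᵀ)⁻¹ * PsiMat Φ * (Rmat X cstar)ᵀ * lastCols Qstar) :
    Tendsto (fun j => Θ (t j)) atTop (nhds Θstar)
    ∧ (Function.Injective
          (Matrix.isHermitian_conjTranspose_mul_self
            (Rmat X cstar * (Mmat Φ Θstar)ᵀ)).eigenvalues →
        cstar = (1 / (n : ℝ)) • ((X - Qstar * Mmat Φ Θstar) *ᵥ fun _ => (1 : ℝ))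
        ∧ Qstarᵀ * Qstar = 1
        ∧ (∀ Q' : Matrix (Fin D) (Fin d ⊕ Fin s) ℝ, Q'ᵀ * Q' = 1 →
            finner (Rmat X cstar * (Mmat Φ Θstar)ᵀ) Q'
              ≤ finner (Rmat X cstar * (Mmat Φ Θstar)ᵀ) Qstar)
        ∧ Θstar = (PsiMat Φ * (PsiMat Φ)ᵀ)⁻¹ * PsiMat Φ * (Rmat X cstar)ᵀ * lastCols Qstar) := by
  -- abbreviations
  set S := PsiMat Φ with hSdef
  have ht_ge : ∀ j, j ≤ t j := fun j => hmono.le_apply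
  have hQo : ∀ u, 1 ≤ u → (Q u)ᵀ * Q u = 1 := by
    intro u hu
    obtain ⟨k, rfl⟩ : ∃ k, u = k + 1 := ⟨u - 1, (Nat.succ_pred_eq_of_pos hu).symm⟩
    exact hQorth k
  have hΘform : ∀ u, 1 ≤ u → Θ u
      = (S * Sᵀ)⁻¹ * S * (Rmat X (c u))ᵀ * lastCols (Q u) := by
    intro u hu
    obtain ⟨k, rfl⟩ : ∃ k, u = k + 1 := ⟨u - 1, (Nat.succ_pred_eq_of_pos hu).symm⟩
    exact hΘ k
  -- Part 1: convergence of Θ (t j)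
  have hGc : Continuous fun p : (Fin D → ℝ) × Matrix (Fin D) (Fin d ⊕ Fin s) ℝ =>
      (S * Sᵀ)⁻¹ * S * (Rmat X p.1)ᵀ * lastCols p.2 :=
    (continuous_const.matrix_mul
      (((continuous_Rmat X).comp continuous_fst).matrix_transpose)).matrix_mul
      (continuous_lastCols.comp continuous_snd)
  have hpair : Tendsto (fun j => (c (t j), Q (t j))) atTop (nhds (cstar, Qstar)) :=
    hcs.prodMk_nhds hQs
  have hΘt : Tendsto (fun j => Θ (t j)) atTop (nhds Θstar) := by
    have h1 := (hGc.tendsto (cstar, Qstar)).comp hpair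
    rw [hΘstar]
    refine h1.congr' ?_
    filter_upwards [eventually_ge_atTop 1] with j hj
    exact (hΘform (t j) (le_trans hj (ht_ge j))).symm
  refine ⟨hΘt, fun _ => ?_⟩
  -- orthogonality of Qstar
  have hQstarorth : Qstarᵀ * Qstar = 1 := by
    have h1 : Tendsto (fun j => (Q (t j))ᵀ * Q (t j)) atTop (nhds (Qstarᵀ * Qstar)) :=
      ((continuous_id.matrix_transpose.matrix_mul continuous_id).tendsto Qstar).comp hQs
    have h2 : Tendsto (fun j => (Q (t j))ᵀ * Q (t j)) atTop
        (nhds (1 : Matrix (Fin d ⊕ Fin s) (Fin d ⊕ Fin s) ℝ)) := by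
      refine tendsto_const_nhds.congr' ?_
      filter_upwards [eventually_ge_atTop 1] with j hj
      exact (hQo (t j) (le_trans hj (ht_ge j))).symm
    exact tendsto_nhds_unique h1 h2
  -- the Lyapunov sequence
  set L : ℕ → ℝ := fun u => ell X (Θ u) (c u) (Q u) Φ with hLdef
  set Lstar : ℝ := ell X Θstar cstar Qstar Φ with hLstardef
  -- single-step decrease
  have hstepΘ : ∀ u, ell X (Θ (u + 1)) (c (u + 1)) (Q (u + 1)) Φ
      ≤ ell X (Θ u) (c (u + 1)) (Q (u + 1)) Φ := by
    intro u
    rw [ell_eq_frob, ell_eq_frob, hΘ u]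
    exact theta_opt Φ hpd (Rmat X (c (u + 1))) (Q (u + 1)) (hQorth u) (Θ u)
  have hstepQ : ∀ u, ∀ Q' : Matrix (Fin D) (Fin d ⊕ Fin s) ℝ, Q'ᵀ * Q' = 1 →
      ell X (Θ u) (c (u + 1)) (Q (u + 1)) Φ ≤ ell X (Θ u) (c (u + 1)) Q' Φ := by
    intro u Q' hQ'
    rw [ell_orth _ _ _ (hQorth u) Φ, ell_orth _ _ _ hQ' Φ]
    have := hQmax u Q' hQ'
    linarith
  have hstepc : ∀ u, ell X (Θ u) (c (u + 1)) (Q u) Φ ≤ ell X (Θ u) (c u) (Q u) Φ := by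
    intro u
    rw [ell_eq_frob', ell_eq_frob', hc u]
    have h := cshift hn (X - Q u * Mmat Φ (Θ u)) (c u)
    have hnn : 0 ≤ (n : ℝ) * ∑ i, (c u i
        - ((1 / (n : ℝ)) • ((X - Q u * Mmat Φ (Θ u)) *ᵥ fun _ => (1 : ℝ))) i) ^ 2 :=
      mul_nonneg (Nat.cast_nonneg n) (Finset.sum_nonneg fun _ _ => sq_nonneg _)
    linarith
  have hdec : ∀ u, 1 ≤ u → L (u + 1) ≤ L u := fun u hu =>
    le_trans (hstepΘ u) (le_trans (hstepQ u (Q u) (hQo u hu)) (hstepc u))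
  have hanti : ∀ a b, 1 ≤ a → a ≤ b → L b ≤ L a := by
    intro a b ha hab
    induction b with
    | zero => exact absurd (le_trans ha hab) (by omega)
    | succ k ih =>
      rcases Nat.lt_or_ge k a with h | h
      · have : a = k + 1 := by omega
        rw [this]
      · exact le_trans (hdec k (le_trans ha h)) (ih h)
  -- convergence of L along the subsequence
  have hL : Tendsto (fun j => L (t j)) atTop (nhds Lstar) := by
    have h1 := ((continuous_ell X Φ).tendsto (cstar, Qstar, Θstar)).comp
      (hcs.prodMk_nhds (hQs.prodMk_nhds hΘt))
    exact h1.congr fun j => rfl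
  have hLlow : ∀ u, 1 ≤ u → Lstar ≤ L u := by
    intro u hu
    refine le_of_tendsto hL ?_
    filter_upwards [eventually_ge_atTop u] with j hj
    exact hanti u (t j) hu (le_trans hj (ht_ge j))
  -- the key chain inequality
  have hkey : ∀ j, 1 ≤ j → ∀ Q' : Matrix (Fin D) (Fin d ⊕ Fin s) ℝ, Q'ᵀ * Q' = 1 →
      Lstar ≤ ell X (Θ (t j)) (c (t j + 1)) Q' Φ := by
    intro j hj Q' hQ'
    calc Lstar ≤ L (t j + 1) := hLlow _ (Nat.le_add_left 1 _)
    _ ≤ ell X (Θ (t j)) (c (t j + 1)) (Q (t j + 1)) Φ := hstepΘ (t j)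
    _ ≤ ell X (Θ (t j)) (c (t j + 1)) Q' Φ := hstepQ (t j) Q' hQ'
  -- convergence of the shifted centers
  set cUp : Fin D → ℝ :=
    (1 / (n : ℝ)) • ((X - Qstar * Mmat Φ Θstar) *ᵥ fun _ => (1 : ℝ)) with hcUpdef
  have hcnext : Tendsto (fun j => c (t j + 1)) atTop (nhds cUp) := by
    have hcont : Continuous (fun p : Matrix (Fin D) (Fin d ⊕ Fin s) ℝ
        × Matrix (PairIdx d) (Fin s) ℝ =>
        (1 / (n : ℝ)) • ((X - p.1 * Mmat Φ p.2) *ᵥ fun _ => (1 : ℝ))) :=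
      Continuous.const_smul (g := fun p : Matrix (Fin D) (Fin d ⊕ Fin s) ℝ
          × Matrix (PairIdx d) (Fin s) ℝ => (X - p.1 * Mmat Φ p.2) *ᵥ fun _ => (1 : ℝ))
        ((continuous_const.sub (continuous_fst.matrix_mul
        ((continuous_Mmat Φ).comp continuous_snd))).matrix_mulVec
          continuous_const) (1 / (n : ℝ))
    have h1 := (hcont.tendsto (Qstar, Θstar)).comp (hQs.prodMk_nhds hΘt)
    exact h1.congr fun j => (hc (t j)).symm
  -- fixed point of the c update
  have hLa : Lstar ≤ ell X Θstar cUp Qstar Φ := by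
    have h1 := ((continuous_ell X Φ).tendsto (cUp, Qstar, Θstar)).comp
      (hcnext.prodMk_nhds (hQs.prodMk_nhds hΘt))
    refine ge_of_tendsto h1 ?_
    filter_upwards [eventually_ge_atTop 1] with j hj
    exact hkey j hj (Q (t j)) (hQo (t j) (le_trans hj (ht_ge j)))
  have hca : cstar = cUp := by
    have hid := cshift hn (X - Qstar * Mmat Φ Θstar) cstar
    have e1 : ell X Θstar cstar Qstar Φ = ell X Θstar cUp Qstar Φ
        + (n : ℝ) * ∑ i, (cstar i - cUp i) ^ 2 := by
      rw [ell_eq_frob', ell_eq_frob']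
      exact hid
    have hsum : (n : ℝ) * ∑ i, (cstar i - cUp i) ^ 2 ≤ 0 := by
      rw [hLstardef] at hLa
      linarith [e1, hLa]
    have hn' : (0 : ℝ) < (n : ℝ) := Nat.cast_pos.mpr hn
    have hsum0 : ∑ i, (cstar i - cUp i) ^ 2 = 0 := by
      have h1 : 0 ≤ ∑ i, (cstar i - cUp i) ^ 2 :=
        Finset.sum_nonneg fun _ _ => sq_nonneg _
      nlinarith
    funext i
    have := (Finset.sum_eq_zero_iff_of_nonneg
      (fun i _ => sq_nonneg (cstar i - cUp i))).mp hsum0 i (Finset.mem_univ i)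
    have := sq_eq_zero_iff.mp this
    linarith [this]
  refine ⟨hca, hQstarorth, ?_, hΘstar⟩
  -- maximality of Qstar
  intro Q' hQ'
  have hLb : Lstar ≤ ell X Θstar cstar Q' Φ := by
    have h1 := ((continuous_ell X Φ).tendsto (cUp, Q', Θstar)).comp
      (hcnext.prodMk_nhds (tendsto_const_nhds.prodMk_nhds hΘt))
    rw [hca]
    refine ge_of_tendsto h1 ?_
    filter_upwards [eventually_ge_atTop 1] with j hj
    exact hkey j hj Q' hQ'
  rw [hLstardef, ell_orth _ _ _ hQstarorth Φ] at hLb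
  rw [ell_orth _ _ _ hQ' Φ] at hLb
  linarith
end
end
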